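/- (Theorem 2, LACE/magnitude-pruning single-step guarantee.) Let Φ be a real n×m matrix with full column rank and let σ > 0 satisfy σ‖v‖₂ ≤ ‖Φv‖₂ for all v ∈ ℝ^m. Suppose y = Φx + ε where x has support S = supp(x), and assume (σ/2)·min_{i∈S}|x_i| > ‖ε‖₂. Then for every index set A with S ⊆ A ⊆ {1,…,m}, if x̂^A denotes the unique minimizer of ‖y − Φz‖₂ over z with supp(z) ⊆ A, then |x̂^A_j| < |x̂^A_i| for every i ∈ S and every j ∈ A \ S. Consequently the coordinate of smallest absolute value deleted by magnitude pruning always lies outside S while A strictly contains S, so LACE recovers S in m − |S| steps. -/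

import Mathlib

open Matrix RealInnerProductSpace

/-- The Euclidean (ℓ₂) norm of a finitely indexed real vector. -/
noncomputable def euclidNorm {ι : Type*} [Fintype ι] (v : ι → ℝ) : ℝ :=
  ‖(WithLp.equiv 2 (ι → ℝ)).symm v‖

lemma euclidNorm_nonneg {ι : Type*} [Fintype ι] (v : ι → ℝ) : 0 ≤ euclidNorm v :=
  norm_nonneg _

lemma abs_apply_le_euclidNorm {ι : Type*} [Fintype ι] (v : ι → ℝ) (l : ι) :
    |v l| ≤ euclidNorm v := by
  have h : euclidNorm v = Real.sqrt (∑ i, ‖v i‖ ^ 2) := by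
    rw [euclidNorm, EuclideanSpace.norm_eq]
    rfl
  rw [h]
  have h1 : |v l| = Real.sqrt (‖v l‖ ^ 2) := by
    rw [Real.sqrt_sq_eq_abs, abs_norm, Real.norm_eq_abs]
  rw [h1]
  apply Real.sqrt_le_sqrt
  exact Finset.single_le_sum (f := fun i => ‖v i‖ ^ 2)
    (fun i _ => sq_nonneg _) (Finset.mem_univ l)

/-- Theorem 2, LACE/magnitude-pruning single-step guarantee.
If `σ > 0` is a lower singular-value bound for the full-column-rank matrix `Φ`,
`y = Φx + ε` with `(σ/2)·min_{i∈S}|x i| > ‖ε‖₂` where `S = supp x`, then for every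
active set `A ⊇ S`, the minimizer `xhatA` of `‖y − Φz‖₂` over `z` supported in `A`
satisfies `|xhatA j| < |xhatA i|` for all `i ∈ S` and `j ∈ A \ S`; hence magnitude
pruning never deletes an atom of `S` while `S ⊊ A`. -/
theorem lace_single_step_guarantee {n m : ℕ}
    (Φ : Matrix (Fin n) (Fin m) ℝ)
    (hΦ : Function.Injective Φ.mulVec)
    (σ : ℝ) (hσ : 0 < σ)
    (hlow : ∀ v : Fin m → ℝ, σ * euclidNorm v ≤ euclidNorm (Φ.mulVec v))
    (x : Fin m → ℝ) (ε : Fin n → ℝ) (y : Fin n → ℝ)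
    (hy : y = Φ.mulVec x + ε)
    (S : Finset (Fin m)) (hS : ∀ i, i ∈ S ↔ x i ≠ 0) (hne : S.Nonempty)
    (hnoise : σ / 2 * S.inf' hne (fun l => |x l|) > euclidNorm ε) :
    ∀ A : Finset (Fin m), S ⊆ A →
      ∀ xhatA : Fin m → ℝ,
        (∀ l, xhatA l ≠ 0 → l ∈ A) →
        (∀ z : Fin m → ℝ, (∀ l, z l ≠ 0 → l ∈ A) →
          euclidNorm (y - Φ.mulVec xhatA) ≤ euclidNorm (y - Φ.mulVec z)) →
        ∀ i ∈ S, ∀ j ∈ A \ S, |xhatA j| < |xhatA i| := by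
  intro A hSA xhatA hsupp hmin i hi j hj
  set μ := S.inf' hne (fun l => |x l|) with hμ
  have hμle : ∀ k ∈ S, μ ≤ |x k| := fun k hk => Finset.inf'_le _ hk
  have hμpos : 0 < μ := by
    have h0 : (0:ℝ) ≤ euclidNorm ε := euclidNorm_nonneg ε
    nlinarith [hnoise]
  -- abbreviations in Euclidean space
  set eq2 := (WithLp.equiv 2 (Fin n → ℝ)).symm with heq2
  set u : EuclideanSpace ℝ (Fin n) := eq2 (y - Φ.mulVec xhatA) with hu
  set d : EuclideanSpace ℝ (Fin n) := eq2 (Φ.mulVec (xhatA - x)) with hd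
  have hxsupp : ∀ l, x l ≠ 0 → l ∈ A := fun l hl => hSA ((hS l).2 hl)
  -- for all t, ‖u‖² ≤ ‖u - t • d‖²
  have key : ∀ t : ℝ, ‖u‖ ^ 2 ≤ ‖u - t • d‖ ^ 2 := by
    intro t
    have hz : ∀ l, (xhatA + t • (xhatA - x)) l ≠ 0 → l ∈ A := by
      intro l hl
      by_contra hlA
      have h1 : xhatA l = 0 := by
        by_contra h; exact hlA (hsupp l h)
      have h2 : x l = 0 := by
        by_contra h; exact hlA (hxsupp l h)
      apply hl
      simp [h1, h2]
    have := hmin _ hz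
    have hrw : y - Φ.mulVec (xhatA + t • (xhatA - x))
        = (y - Φ.mulVec xhatA) - t • (Φ.mulVec (xhatA - x)) := by
      rw [Matrix.mulVec_add, Matrix.mulVec_smul]
      abel
    rw [hrw] at this
    have h1 : euclidNorm ((y - Φ.mulVec xhatA) - t • Φ.mulVec (xhatA - x))
        = ‖u - t • d‖ := by
      rw [euclidNorm, hu, hd, heq2]
      congr 1
    have h2 : euclidNorm (y - Φ.mulVec xhatA) = ‖u‖ := rfl
    rw [h1, h2] at this
    have hun : (0:ℝ) ≤ ‖u‖ := norm_nonneg _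
    nlinarith [this]
  -- inner product ⟪u, d⟫ = 0
  have hinner : (inner ℝ u d : ℝ) = 0 := by
    by_cases hd0 : d = 0
    · simp [hd0]
    · have hdn : (0:ℝ) < ‖d‖ ^ 2 := by
        have : (0:ℝ) < ‖d‖ := norm_pos_iff.mpr hd0
        positivity
      set c := (inner ℝ u d : ℝ) with hc
      set D := ‖d‖ ^ 2 with hD
      have hkey := key (c / D)
      have h5 : ‖(c / D) • d‖ ^ 2 = (c / D) ^ 2 * D := by
        rw [norm_smul, mul_pow, Real.norm_eq_abs, sq_abs, hD]
      have hexp : ‖u - (c / D) • d‖ ^ 2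
          = ‖u‖ ^ 2 - 2 * (c / D) * c + (c / D) ^ 2 * D := by
        rw [norm_sub_sq_real, real_inner_smul_right, h5, ← hc]
        ring
      rw [hexp] at hkey
      have h6 : -2 * (c / D) * c + (c / D) ^ 2 * D = -(c ^ 2 / D) := by
        field_simp
        ring
      have h7 : c ^ 2 / D ≤ 0 := by nlinarith [hkey, h6]
      have h8 : c ^ 2 = (c ^ 2 / D) * D := by field_simp
      have h9 : c ^ 2 ≤ 0 := by
        rw [h8]
        exact mul_nonpos_of_nonpos_of_nonneg h7 (le_of_lt hdn)
      have h10 : c ^ 2 = 0 := le_antisymm h9 (sq_nonneg c)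
      exact pow_eq_zero_iff (n := 2) (by norm_num) |>.1 h10
  -- Pythagoras: ‖ε‖² = ‖u‖² + ‖d‖²
  have hεud : eq2 ε = u + d := by
    have : ε = (y - Φ.mulVec xhatA) + Φ.mulVec (xhatA - x) := by
      rw [hy, Matrix.mulVec_sub]; abel
    rw [this, hu, hd, heq2, WithLp.equiv_symm_apply, WithLp.toLp_add]
  have hpyth : (euclidNorm ε) ^ 2 = ‖u‖ ^ 2 + ‖d‖ ^ 2 := by
    have : euclidNorm ε = ‖u + d‖ := by rw [euclidNorm, hεud]
    rw [this, norm_add_sq_real, hinner]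
    ring
  have hd_le : ‖d‖ ≤ euclidNorm ε := by
    nlinarith [hpyth, sq_nonneg ‖u‖, norm_nonneg d, euclidNorm_nonneg ε]
  -- σ ‖xhatA - x‖ ≤ ‖d‖ ≤ ‖ε‖ < σμ/2
  have hw : euclidNorm (xhatA - x) < μ / 2 := by
    have h1 : σ * euclidNorm (xhatA - x) ≤ euclidNorm (Φ.mulVec (xhatA - x)) := hlow _
    have h2 : euclidNorm (Φ.mulVec (xhatA - x)) = ‖d‖ := rfl
    have h3 : σ * euclidNorm (xhatA - x) < σ / 2 * μ := by
      rw [h2] at h1; linarith [hd_le, hnoise]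
    nlinarith [hσ]
  -- coordinate bounds
  have hjS : j ∉ S := (Finset.mem_sdiff.1 hj).2
  have hxj : x j = 0 := by
    by_contra h; exact hjS ((hS j).2 h)
  have hbj : |xhatA j| < μ / 2 := by
    have := abs_apply_le_euclidNorm (xhatA - x) j
    simp only [Pi.sub_apply, hxj, sub_zero] at this
    linarith
  have hbi : μ / 2 < |xhatA i| := by
    have h1 := abs_apply_le_euclidNorm (xhatA - x) i
    have h2 : μ ≤ |x i| := hμle i hi
    have h3 : |x i| - |xhatA i| ≤ |x i - xhatA i| := abs_sub_abs_le_abs_sub _ _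
    have h4 : |x i - xhatA i| = |(xhatA - x) i| := by
      rw [Pi.sub_apply, abs_sub_comm]
    linarith
  linarith
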